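/- The α-dual of ∫bv equals d(ℓ₁): a sequence a = (aₖ) satisfies ∑ₖ |aₖ xₖ| < ∞ for all x ∈ ∫bv if and only if ∑ₖ |aₖ|/k < ∞. -/

import Mathlib

noncomputable def bvIntTerm (x : ℕ → ℂ) (k : ℕ) : ℝ :=
  ‖(k : ℂ) * x k - ((k - 1 : ℕ) : ℂ) * x (k - 1)‖

def MemBvInt (x : ℕ → ℂ) : Prop := Summable (bvIntTerm x)

/-- The α-dual of `∫bv` equals `d(ℓ₁)`: a sequence `a` satisfies
`∑ₖ |aₖ xₖ| < ∞` for all `x ∈ ∫bv` if and only if `∑ₖ |aₖ|/k < ∞`. -/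
theorem bvInt_alpha_dual (a : ℕ → ℂ) :
    (∀ x : ℕ → ℂ, MemBvInt x → Summable (fun k : ℕ => ‖a k * x k‖)) ↔
    Summable (fun k : ℕ => ‖a k‖ / (k : ℝ)) := by
  constructor
  · intro h
    have hx : MemBvInt (fun k => ((k : ℂ))⁻¹) := by
      apply summable_of_ne_finset_zero (s := Finset.range 2)
      intro k hk
      simp only [Finset.mem_range, not_lt] at hk
      unfold bvIntTerm
      have h1 : ((k : ℂ)) * ((k : ℂ))⁻¹ = 1 := by
        apply mul_inv_cancel₀
        exact_mod_cast (by omega : k ≠ 0)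
      have h2 : (((k - 1 : ℕ) : ℂ)) * (((k - 1 : ℕ) : ℂ))⁻¹ = 1 := by
        apply mul_inv_cancel₀
        exact_mod_cast (by omega : k - 1 ≠ 0)
      simp [h1, h2]
    have := h _ hx
    have heq : ∀ k : ℕ, ‖a k * ((k : ℂ))⁻¹‖ = ‖a k‖ / (k : ℝ) := by
      intro k
      rw [norm_mul, norm_inv, div_eq_mul_inv]
      norm_num
    simpa only [heq] using this
  · intro ha x hx
    set C : ℝ := ∑' k, bvIntTerm x k with hCdef
    have hnn : ∀ k, 0 ≤ bvIntTerm x k := fun k => norm_nonneg _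
    have hC : ∀ n : ℕ, ‖(n : ℂ) * x n‖ ≤ C := by
      intro n
      have key : (n : ℂ) * x n =
          ∑ i ∈ Finset.range n, ((((i + 1 : ℕ)) : ℂ) * x (i + 1) - ((i : ℕ) : ℂ) * x i) := by
        rw [Finset.sum_range_sub (fun k => (k : ℂ) * x k)]
        simp
      rw [key]
      calc ‖∑ i ∈ Finset.range n, ((((i + 1 : ℕ)) : ℂ) * x (i + 1) - ((i : ℕ) : ℂ) * x i)‖
          ≤ ∑ i ∈ Finset.range n, ‖(((i + 1 : ℕ)) : ℂ) * x (i + 1) - ((i : ℕ) : ℂ) * x i‖ :=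
            norm_sum_le _ _
        _ = ∑ i ∈ Finset.range n, bvIntTerm x (i + 1) := by
            apply Finset.sum_congr rfl
            intro i _
            unfold bvIntTerm
            simp
        _ = ∑ j ∈ (Finset.range n).image (· + 1), bvIntTerm x j := by
            rw [Finset.sum_image (by intro a _ b _ h; simp only at h; omega)]
        _ ≤ C := Summable.sum_le_tsum _ (fun i _ => hnn i) hx
    -- bound the tail
    have hbound : ∀ k : ℕ, ‖a (k + 1) * x (k + 1)‖ ≤ C * (‖a (k + 1)‖ / ((k + 1 : ℕ) : ℝ)) := by
      intro k
      have hpos : (0 : ℝ) < ((k + 1 : ℕ) : ℝ) := by positivity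
      have := hC (k + 1)
      have hxk : ‖x (k + 1)‖ ≤ C / ((k + 1 : ℕ) : ℝ) := by
        rw [le_div_iff₀ hpos]
        calc ‖x (k + 1)‖ * ((k + 1 : ℕ) : ℝ) = ‖((k + 1 : ℕ) : ℂ) * x (k + 1)‖ := by
              rw [norm_mul, Complex.norm_natCast]; ring
          _ ≤ C := hC (k + 1)
      calc ‖a (k + 1) * x (k + 1)‖ = ‖a (k + 1)‖ * ‖x (k + 1)‖ := norm_mul _ _
        _ ≤ ‖a (k + 1)‖ * (C / ((k + 1 : ℕ) : ℝ)) := by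
            exact mul_le_mul_of_nonneg_left hxk (norm_nonneg _)
        _ = C * (‖a (k + 1)‖ / ((k + 1 : ℕ) : ℝ)) := by ring
    have hsum : Summable (fun k : ℕ => ‖a (k + 1) * x (k + 1)‖) := by
      apply Summable.of_nonneg_of_le (fun k => norm_nonneg _) hbound
      exact ((summable_nat_add_iff 1).mpr (ha.mul_left C))
    exact (summable_nat_add_iff 1).mp hsum
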